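/- For a positive real y and complex z with 0 < Re z < 2, (sin(πz/2)/π) · ∫₀^∞ λ^{-z/2}(y+λ)^{-2} dλ = (z/2) · y^{-z/2 - 1}. -/

import Mathlib

set_option maxHeartbeats 1000000

open MeasureTheory Set Complex

/- STATEMENT 2: For a positive real `y` and complex `z` with `0 < Re z < 2`,
   `(sin(πz/2)/π) ∫₀^∞ λ^{-z/2}(y+λ)^{-2} dλ = (z/2) y^{-z/2-1}`. -/
theorem stmt_2 (y : ℝ) (hy : 0 < y) (z : ℂ) (h0 : 0 < z.re) (h2 : z.re < 2) :
    (Complex.sin (Real.pi * z / 2) / Real.pi) *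
      ∫ l in Set.Ioi (0:ℝ), (l : ℂ) ^ (-z / 2) * (((y : ℂ) + l) ^ 2)⁻¹ =
    (z / 2) * (y : ℂ) ^ (-z / 2 - 1) := by
  have hy' : (y : ℂ) ≠ 0 := Complex.ofReal_ne_zero.mpr hy.ne'
  have hz2re : (z / 2).re = z.re / 2 := by
    rw [show (2:ℂ) = ((2:ℝ):ℂ) by norm_num, Complex.div_ofReal_re]
  set f : ℝ → ℝ := fun x => y * x / (1 - x) with hf_def
  -- image
  have himg : f '' Ioo (0:ℝ) 1 = Ioi (0:ℝ) := by
    ext l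
    constructor
    · rintro ⟨x, ⟨hx1, hx2⟩, rfl⟩
      exact div_pos (mul_pos hy hx1) (by linarith)
    · intro hl
      have hl : (0:ℝ) < l := hl
      refine ⟨l / (y + l), ⟨div_pos hl (by linarith), (div_lt_one (by linarith)).mpr (by linarith)⟩, ?_⟩
      have hyl : (y + l) ≠ 0 := by positivity
      show y * (l / (y + l)) / (1 - l / (y + l)) = l
      have h1 : 1 - l / (y + l) = y / (y + l) := by field_simp; ring
      rw [h1]
      field_simp
  have hinj : InjOn f (Ioo (0:ℝ) 1) := by
    rintro a ⟨ha1, ha2⟩ b ⟨hb1, hb2⟩ hab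
    have h1a : (1:ℝ) - a ≠ 0 := by linarith
    have h1b : (1:ℝ) - b ≠ 0 := by linarith
    rw [hf_def] at hab
    field_simp at hab
    nlinarith [hab]
  have hderiv : ∀ x ∈ Ioo (0:ℝ) 1, HasDerivWithinAt f (y / (1 - x) ^ 2) (Ioo (0:ℝ) 1) x := by
    intro x hx
    have h1x : (1:ℝ) - x ≠ 0 := by
      have := hx.2; linarith
    have h : HasDerivAt f ((y * 1 * (1 - id x) - y * id x * (0 - 1)) / (1 - id x) ^ 2) x :=
      ((hasDerivAt_id x).const_mul y).div
        ((hasDerivAt_const x (1:ℝ)).sub (hasDerivAt_id x)) h1x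
    have e : (y * 1 * (1 - id x) - y * id x * (0 - 1)) / (1 - id x) ^ 2 = y / (1 - x) ^ 2 := by
      simp only [id_eq]
      congr 1
      ring
    rw [e] at h
    exact h.hasDerivWithinAt
  have key := integral_image_eq_integral_abs_deriv_smul measurableSet_Ioo hderiv hinj
    (fun l : ℝ => (l : ℂ) ^ (-z / 2) * (((y : ℂ) + l) ^ 2)⁻¹)
  rw [himg] at key
  -- compute the transformed integrand
  have hpt : ∀ x ∈ Ioo (0:ℝ) 1,
      |y / (1 - x) ^ 2| • (((f x : ℝ) : ℂ) ^ (-z / 2) * (((y : ℂ) + (f x : ℝ)) ^ 2)⁻¹)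
        = (y : ℂ) ^ (-z / 2 - 1) *
          ((x : ℂ) ^ ((1 - z / 2) - 1) * ((1 : ℂ) - (x : ℝ)) ^ ((1 + z / 2) - 1)) := by
    intro x hx
    obtain ⟨hx1, hx2⟩ := hx
    have h1x : (0:ℝ) < 1 - x := by linarith
    have hfxr : f x = (y * x) * (1 - x)⁻¹ := by rw [hf_def]; ring
    have hyfxr : y + f x = y / (1 - x) := by
      rw [hf_def]; field_simp; ring
    have hyfx : (y : ℂ) + ((f x : ℝ) : ℂ) = ((y / (1 - x) : ℝ) : ℂ) := by
      rw [← Complex.ofReal_add, hyfxr]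
    have hsplit : ((f x : ℝ) : ℂ) ^ (-z / 2)
        = ((y : ℝ) : ℂ) ^ (-z / 2) * ((x : ℝ) : ℂ) ^ (-z / 2) * ((1 - x : ℝ) : ℂ) ^ (z / 2) := by
      rw [hfxr, Complex.ofReal_mul (y * x) (1 - x)⁻¹,
        mul_cpow_ofReal_nonneg (by positivity) (by positivity),
        Complex.ofReal_mul y x, mul_cpow_ofReal_nonneg hy.le hx1.le]
      congr 1
      rw [Complex.ofReal_inv, Complex.inv_cpow _ _ (by
        rw [Complex.arg_ofReal_of_nonneg h1x.le]; exact Real.pi_ne_zero.symm),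
        ← Complex.cpow_neg]
      congr 1
      ring
    rw [hsplit, hyfx]
    rw [abs_of_pos (by positivity : (0:ℝ) < y / (1 - x) ^ 2)]
    rw [Complex.real_smul]
    have hc1 : ((((y / (1 - x) : ℝ)) : ℂ) ^ 2)⁻¹ = (((1 - x) ^ 2 / y ^ 2 : ℝ) : ℂ) := by
      rw [← Complex.ofReal_pow, ← Complex.ofReal_inv]
      congr 1
      rw [div_pow, inv_div]
    rw [hc1]
    have hcy : ((y : ℝ) : ℂ) ^ (-z / 2 - 1) = ((y : ℝ) : ℂ) ^ (-z / 2) * ((y:ℂ))⁻¹ := by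
      rw [Complex.cpow_sub _ _ hy', Complex.cpow_one]
      ring
    have hsimp1 : ((x : ℂ)) ^ ((1 - z / 2) - 1) = ((x:ℝ):ℂ) ^ (-z / 2) := by
      congr 1; ring
    have hsimp2 : ((1 : ℂ) - ((x:ℝ):ℂ)) ^ ((1 + z / 2) - 1) = ((1 - x : ℝ):ℂ) ^ (z / 2) := by
      rw [show ((1:ℂ) - ((x:ℝ):ℂ)) = ((1 - x : ℝ) : ℂ) by push_cast; ring]
      congr 1; ring
    rw [hsimp1, hsimp2, hcy]
    have hreal : ((y / (1 - x) ^ 2 : ℝ) : ℂ) * (((1 - x) ^ 2 / y ^ 2 : ℝ) : ℂ) = ((y:ℂ))⁻¹ := by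
      rw [← Complex.ofReal_mul, ← Complex.ofReal_inv]
      congr 1
      field_simp
    linear_combination (((y:ℝ):ℂ) ^ (-z / 2) * ((x:ℝ):ℂ) ^ (-z / 2) *
      ((1 - x : ℝ):ℂ) ^ (z / 2)) * hreal
  rw [setIntegral_congr_fun measurableSet_Ioo hpt] at key
  rw [MeasureTheory.integral_const_mul] at key
  -- identify with Beta integral
  have hbeta : (∫ x in Ioo (0:ℝ) 1,
      ((x : ℂ) ^ ((1 - z / 2) - 1) * ((1 : ℂ) - (x : ℝ)) ^ ((1 + z / 2) - 1)))
      = Complex.betaIntegral (1 - z / 2) (1 + z / 2) := by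
    rw [Complex.betaIntegral, intervalIntegral.integral_of_le zero_le_one,
      MeasureTheory.integral_Ioc_eq_integral_Ioo]
  rw [hbeta] at key
  -- evaluate Beta via Gamma
  have hre1 : 0 < (1 - z / 2).re := by
    rw [Complex.sub_re, Complex.one_re, hz2re]
    linarith
  have hre2 : 0 < (1 + z / 2).re := by
    rw [Complex.add_re, Complex.one_re, hz2re]
    linarith
  have hGamma := Complex.Gamma_mul_Gamma_eq_betaIntegral hre1 hre2
  have hsum : (1 - z / 2) + (1 + z / 2) = 2 := by ring
  have hG2 : Complex.Gamma 2 = 1 := by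
    rw [show (2:ℂ) = 1 + 1 by norm_num, Complex.Gamma_add_one _ one_ne_zero,
      Complex.Gamma_one, mul_one]
  rw [hsum, hG2, one_mul] at hGamma
  have hz2 : z / 2 ≠ 0 := by
    intro h
    have : (z / 2).re = 0 := by rw [h]; simp
    rw [hz2re] at this
    linarith
  have hG1 : Complex.Gamma (1 + z / 2) = (z / 2) * Complex.Gamma (z / 2) := by
    rw [add_comm]
    exact Complex.Gamma_add_one _ hz2
  have hrefl : Complex.Gamma (z / 2) * Complex.Gamma (1 - z / 2)
      = (Real.pi : ℂ) / Complex.sin ((Real.pi : ℂ) * (z / 2)) :=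
    Complex.Gamma_mul_Gamma_one_sub (z / 2)
  have hB : Complex.betaIntegral (1 - z / 2) (1 + z / 2)
      = (z / 2) * ((Real.pi : ℂ) / Complex.sin ((Real.pi : ℂ) * (z / 2))) := by
    rw [← hGamma, hG1, ← hrefl]
    ring
  -- sin nonzero
  have hpi : ((Real.pi : ℝ) : ℂ) ≠ 0 := Complex.ofReal_ne_zero.mpr Real.pi_ne_zero
  have hsin : Complex.sin ((Real.pi : ℂ) * (z / 2)) ≠ 0 := by
    intro h
    rw [Complex.sin_eq_zero_iff] at h
    obtain ⟨k, hk⟩ := h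
    have hzk : z / 2 = (k : ℂ) := by
      have : (Real.pi : ℂ) * (z / 2) = (Real.pi : ℂ) * (k : ℂ) := by rw [hk]; ring
      exact mul_left_cancel₀ hpi this
    have hre : z.re / 2 = (k : ℝ) := by
      have := congrArg Complex.re hzk
      rw [hz2re] at this
      simpa using this
    have hk0 : (0:ℝ) < (k : ℝ) := by rw [← hre]; linarith
    have hk1 : (k : ℝ) < 1 := by rw [← hre]; linarith
    have hk0' : 0 < k := by exact_mod_cast hk0
    have hk1' : k < 1 := by exact_mod_cast hk1
    omega
  have harg : ((Real.pi : ℂ) * z / 2) = (Real.pi : ℂ) * (z / 2) := by ring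
  have hs1 : Complex.sin ((Real.pi : ℂ) * (z / 2)) / (Real.pi : ℂ) *
      ((Real.pi : ℂ) / Complex.sin ((Real.pi : ℂ) * (z / 2))) = 1 := by
    field_simp
    rw [mul_div_assoc]
    exact div_self hsin
  rw [key, hB, harg]
  linear_combination (z / 2) * ((y : ℂ) ^ (-z / 2 - 1)) * hs1
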